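/- If φ ∈ C₀³(ℝ) and h_Δx is the piecewise constant function equal to the discrete Hilbert transform ℍ(φ)(x_j) on each cell [x_j, x_{j+1}), then h_Δx converges to the continuous Hilbert transform H(φ) in L²(ℝ) as Δx → 0. -/

import Mathlib

open MeasureTheory Filter

/-- Discrete Hilbert transform on ℤ. -/
noncomputable def Hdisc (u : ℤ → ℝ) (j : ℤ) : ℝ :=
  (1 / Real.pi) * ∑' k : ℤ, if k = j then 0
    else u k * (1 - (-1 : ℝ) ^ (j - k)) / ((j : ℝ) - (k : ℝ))

/-- Piecewise-constant interpolation of the discrete Hilbert transform of the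
grid values of φ: h_Δx(x) = ℍ(φ)_j for x ∈ [x_j, x_{j+1}), x_j = jΔx. -/
noncomputable def hDx (Δx : ℝ) (φ : ℝ → ℝ) (x : ℝ) : ℝ :=
  Hdisc (fun j : ℤ => φ (j * Δx)) ⌊x / Δx⌋

set_option maxHeartbeats 1000000 in
noncomputable def Tsum (φ : ℝ → ℝ) (h a : ℝ) : ℝ :=
  ∑' m : ℕ, (φ (a - (2 * (m:ℝ) + 1) * h) - φ (a + (2 * (m:ℝ) + 1) * h)) / (2 * (m:ℝ) + 1)

noncomputable def gker (φ : ℝ → ℝ) (a y : ℝ) : ℝ := -∫ s in (-1:ℝ)..1, deriv φ (a + s * y)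

lemma hdisc_eq (φ : ℝ → ℝ) (R : ℝ) (hR : ∀ y, R < |y| → φ y = 0)
    {h : ℝ} (hh : 0 < h) (j : ℤ) :
    Hdisc (fun k : ℤ => φ (k * h)) j = (2 / Real.pi) * Tsum φ h (j * h) := by
  classical
  set f : ℤ → ℝ := fun n => if n = 0 then 0
      else φ ((j - n : ℤ) * h) * (1 - (-1 : ℝ) ^ n) / (n : ℝ) with hf
  have hre : (∑' k : ℤ, if k = j then 0
      else φ ((k:ℝ) * h) * (1 - (-1 : ℝ) ^ (j - k)) / ((j : ℝ) - (k : ℝ)))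
      = ∑' n : ℤ, f n := by
    rw [← (Equiv.subLeft j).tsum_eq]
    apply tsum_congr
    intro n
    simp only [Equiv.subLeft_apply, hf]
    have h1 : j - n = j ↔ n = 0 := by omega
    have h2 : j - (j - n) = n := by omega
    rw [h2]
    by_cases hn : n = 0
    · simp [hn]
    · rw [if_neg (by omega), if_neg hn]
      push_cast
      ring_nf
  -- summability of f
  have hfin : ∀ n : ℤ, f n ≠ 0 → n ∈ Finset.Icc (j - (⌈R/h⌉ + 1)) (j + (⌈R/h⌉ + 1)) := by
    intro n hn
    have hn0 : n ≠ 0 := by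
      intro e; apply hn; simp [hf, e]
    have hfn : f n = φ ((j - n : ℤ) * h) * (1 - (-1 : ℝ) ^ n) / (n : ℝ) := by
      simp only [hf]; rw [if_neg hn0]
    have hphi : φ ((j - n : ℤ) * h) ≠ 0 := by
      intro h0; rw [hfn, h0, zero_mul, zero_div] at hn; exact hn rfl
    have habs : |((j - n : ℤ) : ℝ) * h| ≤ R := by
      by_contra hc
      exact hphi (hR _ (lt_of_not_ge hc))
    have hjn : |((j - n : ℤ) : ℝ)| ≤ R / h := by
      rw [le_div_iff₀ hh]
      calc |((j - n : ℤ) : ℝ)| * h = |((j - n : ℤ) : ℝ) * h| := by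
            rw [abs_mul, abs_of_pos hh]
        _ ≤ R := habs
    have hineq : |j - n| ≤ ⌈R / h⌉ := by
      have h1 : ((|j - n| : ℤ) : ℝ) ≤ R / h := by rw [Int.cast_abs]; exact hjn
      exact_mod_cast h1.trans (Int.le_ceil _)
    rw [Finset.mem_Icc]
    rw [abs_le] at hineq
    omega
  have hsumm : Summable f := summable_of_ne_finset_zero (s := Finset.Icc (j - (⌈R/h⌉ + 1)) (j + (⌈R/h⌉ + 1)))
    (fun n hn => by by_contra hz; exact hn (hfin n hz))
  set S := ∑' n : ℤ, f n with hS
  have hhs : HasSum f S := hsumm.hasSum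
  have h2 : HasSum (fun n : ℕ => f n + f (-n)) S := by
    have := hhs.nat_add_neg
    simpa [hf] using this
  have hg : Function.Injective (fun m : ℕ => 2 * m + 1) := fun a b hab => by
    have : 2 * a + 1 = 2 * b + 1 := hab
    omega
  have hrange : ∀ n : ℕ, n ∉ Set.range (fun m : ℕ => 2 * m + 1) → f (n : ℤ) + f (-(n : ℤ)) = 0 := by
    intro n hn
    have heven : Even n := by
      rcases Nat.even_or_odd n with he | ho
      · exact he
      · exfalso; obtain ⟨m, hm⟩ := ho
        exact hn ⟨m, by show 2 * m + 1 = n; omega⟩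
    have he1 : Even (n : ℤ) := (Int.even_coe_nat n).mpr heven
    have hz1 : (-1 : ℝ) ^ (n : ℤ) = 1 := he1.neg_one_zpow
    have hz2 : (-1 : ℝ) ^ (-(n : ℤ)) = 1 := (he1.neg).neg_one_zpow
    simp only [hf, hz1, hz2, sub_self, mul_zero, zero_mul, zero_div, mul_zero]
    split_ifs <;> simp
  have h3 : HasSum ((fun n : ℕ => f n + f (-n)) ∘ (fun m : ℕ => 2 * m + 1)) S :=
    (hg.hasSum_iff hrange).mpr h2
  have hterm : ∀ m : ℕ, ((fun n : ℕ => f n + f (-n)) ∘ (fun m : ℕ => 2 * m + 1)) m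
      = 2 * ((φ ((j:ℝ) * h - (2 * (m:ℝ) + 1) * h) - φ ((j:ℝ) * h + (2 * (m:ℝ) + 1) * h)) / (2 * (m:ℝ) + 1)) := by
    intro m
    have hcast : ((2 * m + 1 : ℕ) : ℤ) = 2 * (m:ℤ) + 1 := by push_cast; ring
    have hodd : Odd (2 * (m:ℤ) + 1) := ⟨m, by ring⟩
    have hoddneg : Odd (-(2 * (m:ℤ) + 1)) := hodd.neg
    have hne0 : (2 * (m:ℤ) + 1) ≠ 0 := by omega
    have hne0' : -(2 * (m:ℤ) + 1) ≠ 0 := by omega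
    have hA : ((j - (2 * m + 1 : ℕ) : ℤ) : ℝ) * h = (j:ℝ) * h - (2 * (m:ℝ) + 1) * h := by
      push_cast; ring
    have hB : ((j - -(2 * m + 1 : ℕ) : ℤ) : ℝ) * h = (j:ℝ) * h + (2 * (m:ℝ) + 1) * h := by
      push_cast; ring
    have hc1 : ((2 * (m:ℤ) + 1 : ℤ) : ℝ) = 2 * (m:ℝ) + 1 := by push_cast; ring
    have hc2 : ((-(2 * (m:ℤ) + 1) : ℤ) : ℝ) = -(2 * (m:ℝ) + 1) := by push_cast; ring
    simp only [Function.comp_apply, hf, hcast]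
    rw [if_neg hne0, if_neg hne0', hodd.neg_one_zpow, hoddneg.neg_one_zpow]
    rw [show j - -(2 * (m:ℤ) + 1) = j - (-(2 * m + 1 : ℕ) : ℤ) from by push_cast; ring,
        show j - (2 * (m:ℤ) + 1) = j - ((2 * m + 1 : ℕ) : ℤ) from by push_cast; ring,
        hA, hB]
    have hne : (2 * (m:ℝ) + 1) ≠ 0 := by positivity
    have key : ∀ X Y c : ℝ, c ≠ 0 → X * (1 - -1) / c + Y * (1 - -1) / -c = 2 * ((X - Y) / c) := by
      intro X Y c hc
      rw [div_neg]
      ring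
    rw [hc1, hc2]
    exact key _ _ _ hne
  have hS2 : S = 2 * Tsum φ h ((j:ℝ) * h) := by
    rw [← h3.tsum_eq]
    rw [show ((fun n : ℕ => f n + f (-n)) ∘ (fun m : ℕ => 2 * m + 1))
      = fun m : ℕ => 2 * ((φ ((j:ℝ) * h - (2 * (m:ℝ) + 1) * h) - φ ((j:ℝ) * h + (2 * (m:ℝ) + 1) * h)) / (2 * (m:ℝ) + 1)) from funext hterm]
    rw [tsum_mul_left]
    rfl
  rw [Hdisc, hre, hS2]
  ring


lemma card_le_of_spacing {h A D : ℝ} (hh : 0 < h) (hD : 0 ≤ D) (s : Finset ℕ)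
    (hs : ∀ m ∈ s, A ≤ (2 * (m:ℝ) + 1) * h ∧ (2 * (m:ℝ) + 1) * h ≤ A + D) :
    (s.card : ℝ) ≤ D / (2 * h) + 1 := by
  rcases s.eq_empty_or_nonempty with rfl | hne
  · simp; positivity
  · set m₀ := s.min' hne with hm₀
    have hm₀s : m₀ ∈ s := s.min'_mem hne
    have hsub : s ⊆ Finset.Icc m₀ (m₀ + ⌊D / (2 * h)⌋₊) := by
      intro m hm
      rw [Finset.mem_Icc]
      refine ⟨s.min'_le m hm, ?_⟩
      have h1 := (hs m hm).2
      have h2 := (hs m₀ hm₀s).1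
      have hle : ((m - m₀ : ℕ) : ℝ) ≤ D / (2 * h) := by
        have hmm : m₀ ≤ m := s.min'_le m hm
        have : ((m:ℝ) - m₀) * (2 * h) ≤ D := by nlinarith
        have h3 : ((m:ℝ) - m₀) ≤ D / (2 * h) := by
          rw [le_div_iff₀ (by positivity)]; exact this
        rwa [Nat.cast_sub hmm]
      have := Nat.le_floor hle
      omega
    calc (s.card : ℝ) ≤ ((Finset.Icc m₀ (m₀ + ⌊D / (2 * h)⌋₊)).card : ℝ) := by
          exact_mod_cast Finset.card_le_card hsub
      _ = (⌊D / (2 * h)⌋₊ : ℝ) + 1 := by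
          rw [Nat.card_Icc, show m₀ + ⌊D / (2 * h)⌋₊ + 1 - m₀ = ⌊D / (2 * h)⌋₊ + 1 from by omega]
          push_cast; ring
      _ ≤ D / (2 * h) + 1 := by
          have := Nat.floor_le (by positivity : (0:ℝ) ≤ D / (2 * h))
          linarith

lemma sum_bound_aux {h B R : ℝ} (hh : 0 < h) (hB : 0 ≤ B) (hR : 0 ≤ R)
    (s : Finset ℕ) (f : ℕ → ℝ) (A : ℝ)
    (hf : ∀ m ∈ s, |f m| ≤ B)
    (hsup : ∀ m ∈ s, f m ≠ 0 → A ≤ (2 * (m:ℝ) + 1) * h ∧ (2 * (m:ℝ) + 1) * h ≤ A + 2 * R) :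
    ∑ m ∈ s, |f m| ≤ B * (R / h + 1) := by
  classical
  have h1 : ∑ m ∈ s, |f m| = ∑ m ∈ s.filter (fun m => f m ≠ 0), |f m| := by
    rw [Finset.sum_filter_of_ne]
    intro m _ hfm
    exact fun h0 => hfm (by rw [h0, abs_zero])
  rw [h1]
  have hcard : ((s.filter (fun m => f m ≠ 0)).card : ℝ) ≤ (2 * R) / (2 * h) + 1 := by
    apply card_le_of_spacing hh (by positivity) _
    intro m hm
    rw [Finset.mem_filter] at hm
    exact hsup m hm.1 hm.2
  calc ∑ m ∈ s.filter (fun m => f m ≠ 0), |f m|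
      ≤ ∑ _m ∈ s.filter (fun m => f m ≠ 0), B :=
        Finset.sum_le_sum (fun m hm => hf m (Finset.mem_filter.mp hm).1)
    _ = ((s.filter (fun m => f m ≠ 0)).card : ℝ) * B := by rw [Finset.sum_const, nsmul_eq_mul]
    _ ≤ ((2 * R) / (2 * h) + 1) * B := by nlinarith [Nat.cast_nonneg (α := ℝ) (s.filter (fun m => f m ≠ 0)).card]
    _ = B * (R / h + 1) := by rw [mul_comm]; congr 1; congr 1; field_simp

lemma Tsum_decay (φ : ℝ → ℝ) (B L R : ℝ) (hB : 0 ≤ B) (hL : 0 ≤ L) (hR : 1 ≤ R)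
    (hbound : ∀ y, |φ y| ≤ B) (hlip : ∀ u v, |φ u - φ v| ≤ L * |u - v|)
    (hsupp : ∀ y, R < |y| → φ y = 0) {h : ℝ} (hh : 0 < h) (hh1 : h ≤ 1) (a : ℝ) :
    |Tsum φ h a| ≤ ((1 + R) * (3 * L + 2 * B * (R + 1)) + 2 * B * (R + 1)) / (1 + |a|) := by
  classical
  have hR0 : (0:ℝ) ≤ R := le_trans zero_le_one hR
  set c : ℕ → ℝ := fun m => (2 * (m:ℝ) + 1) * h with hc
  set term : ℕ → ℝ := fun m => (φ (a - c m) - φ (a + c m)) / (2 * (m:ℝ) + 1) with hterm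
  have hcpos : ∀ m : ℕ, 0 < c m := fun m => by
    simp only [hc]; positivity
  have hd : ∀ m : ℕ, (0:ℝ) < 2 * (m:ℝ) + 1 := fun m => by positivity
  set N : ℕ := ⌊(R + |a|) / (2 * h)⌋₊ + 1 with hN
  have hNbig : R + |a| < 2 * (N:ℝ) * h := by
    have h1 : (R + |a|) / (2 * h) < N := by
      rw [hN]; push_cast; exact Nat.lt_floor_add_one _
    calc R + |a| = ((R + |a|) / (2 * h)) * (2 * h) := by field_simp
      _ < (N:ℝ) * (2 * h) := by
          apply mul_lt_mul_of_pos_right h1 (by positivity)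
      _ = 2 * (N:ℝ) * h := by ring
  have hvanish : ∀ m : ℕ, N ≤ m → term m = 0 := by
    intro m hm
    have hcm : R + |a| < c m := by
      have : (2 * (N:ℝ) + 1) * h ≤ (2 * (m:ℝ) + 1) * h := by
        have : (N:ℝ) ≤ m := by exact_mod_cast hm
        nlinarith
      have : 2 * (N:ℝ) * h < (2 * (m:ℝ) + 1) * h := by nlinarith
      exact lt_of_lt_of_le hNbig (le_of_lt this)
    have h1 : φ (a - c m) = 0 := by
      apply hsupp; rw [abs_sub_comm]
      calc R < c m - |a| := by linarith
        _ ≤ |c m - a| := by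
            have := abs_sub_abs_le_abs_sub (c m) a
            have hca : |c m| = c m := abs_of_pos (hcpos m)
            linarith
    have h2 : φ (a + c m) = 0 := by
      apply hsupp
      calc R < c m - |a| := by linarith
        _ ≤ |a + c m| := by
            have h3 : |a + c m| ≥ |c m| - |a| := by
              have := abs_add_le (a + c m) (-a)
              simp only [add_neg_cancel_comm] at this
              rw [abs_neg] at this
              linarith
            have hca : |c m| = c m := abs_of_pos (hcpos m)
            linarith
    simp only [hterm, h1, h2, sub_zero, zero_sub, sub_self, zero_div]
  have htsum : Tsum φ h a = ∑ m ∈ Finset.range N, term m := by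
    apply tsum_eq_sum
    intro m hm
    exact hvanish m (by simpa using Nat.le_of_not_lt (fun hlt => hm (Finset.mem_range.mpr hlt)))
  -- pointwise bounds
  have bound1 : ∀ m : ℕ, |term m| ≤ 2 * L * h := by
    intro m
    have : |term m| = |φ (a - c m) - φ (a + c m)| / (2 * (m:ℝ) + 1) := by
      rw [hterm]; rw [abs_div, abs_of_pos (hd m)]
    rw [this, div_le_iff₀ (hd m)]
    calc |φ (a - c m) - φ (a + c m)| ≤ L * |(a - c m) - (a + c m)| := hlip _ _
      _ = L * (2 * c m) := by
          rw [show (a - c m) - (a + c m) = -(2 * c m) from by ring, abs_neg,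
            abs_of_pos (by positivity)]
      _ = 2 * L * h * (2 * (m:ℝ) + 1) := by rw [hc]; ring
  have htri : ∀ m : ℕ, |φ (a - c m) - φ (a + c m)| ≤ |φ (a - c m)| + |φ (a + c m)| := by
    intro m
    calc |φ (a - c m) - φ (a + c m)| = |φ (a - c m) + -(φ (a + c m))| := by rw [sub_eq_add_neg]
      _ ≤ |φ (a - c m)| + |-(φ (a + c m))| := abs_add_le _ _
      _ = |φ (a - c m)| + |φ (a + c m)| := by rw [abs_neg]
  have habs_term : ∀ m : ℕ, |term m| = |φ (a - c m) - φ (a + c m)| / (2 * (m:ℝ) + 1) := by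
    intro m
    rw [hterm, abs_div, abs_of_pos (hd m)]
  have bound2 : ∀ m : ℕ, 1 ≤ c m → |term m| ≤ h * |φ (a - c m)| + h * |φ (a + c m)| := by
    intro m hcm1
    rw [habs_term m]
    calc |φ (a - c m) - φ (a + c m)| / (2 * (m:ℝ) + 1)
        ≤ (|φ (a - c m)| + |φ (a + c m)|) / (2 * (m:ℝ) + 1) := by gcongr; exact htri m
      _ = (|φ (a - c m)| + |φ (a + c m)|) * h / (c m) := by
          rw [hc]
          rw [mul_div_mul_right _ _ (ne_of_gt hh)]
      _ ≤ (|φ (a - c m)| + |φ (a + c m)|) * h := by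
          apply div_le_self (by positivity) hcm1
      _ = h * |φ (a - c m)| + h * |φ (a + c m)| := by ring
  have bound3 : ∀ m : ℕ, c m * |term m| ≤ h * |φ (a - c m)| + h * |φ (a + c m)| := by
    intro m
    rw [habs_term m]
    calc c m * (|φ (a - c m) - φ (a + c m)| / (2 * (m:ℝ) + 1))
        = |φ (a - c m) - φ (a + c m)| * h := by
          rw [hc]; field_simp
      _ ≤ (|φ (a - c m)| + |φ (a + c m)|) * h := by
          have := htri m; nlinarith
      _ = h * |φ (a - c m)| + h * |φ (a + c m)| := by ring
  -- sums of h * |φ (a ∓ c m)| over any subset of range N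
  have hsum_phi : ∀ (s : Finset ℕ) (sgn : Bool),
      ∑ m ∈ s, h * |φ (if sgn then a - c m else a + c m)| ≤ B * (R + h) := by
    intro s sgn
    have := sum_bound_aux (h := h) (B := B * h) (R := R)
      hh (by positivity) hR0 s (fun m => h * φ (if sgn then a - c m else a + c m))
      (if sgn then a - R else -a - R) ?_ ?_
    · calc ∑ m ∈ s, h * |φ (if sgn then a - c m else a + c m)|
          = ∑ m ∈ s, |h * φ (if sgn then a - c m else a + c m)| := by
            apply Finset.sum_congr rfl; intro m _
            rw [abs_mul, abs_of_pos hh]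
        _ ≤ B * h * (R / h + 1) := this
        _ = B * (R + h) := by field_simp
    · intro m _
      rw [abs_mul, abs_of_pos hh]
      calc h * |φ (if sgn then a - c m else a + c m)| ≤ h * B := by
            have := hbound (if sgn then a - c m else a + c m); nlinarith
        _ = B * h := by ring
    · intro m _ hne
      have hphi : φ (if sgn = true then a - c m else a + c m) ≠ 0 := by
        intro h0
        exact hne (by show h * φ (if sgn = true then a - c m else a + c m) = 0
                      rw [h0, mul_zero])
      have habs : |(if sgn = true then a - c m else a + c m)| ≤ R := by
        by_contra hgt
        exact hphi (hsupp _ (lt_of_not_ge hgt))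
      simp only [hc] at habs ⊢
      rcases sgn with _ | _
      · simp only [Bool.false_eq_true, if_false] at habs ⊢
        rw [abs_le] at habs
        obtain ⟨hl, hr⟩ := habs
        constructor <;> linarith
      · simp only [if_true] at habs ⊢
        rw [abs_le] at habs
        obtain ⟨hl, hr⟩ := habs
        constructor <;> linarith
  -- main splits
  set s₁ : Finset ℕ := (Finset.range N).filter (fun m => c m ≤ 1) with hs₁
  set s₂ : Finset ℕ := (Finset.range N).filter (fun m => ¬ c m ≤ 1) with hs₂
  have hsplit : ∑ m ∈ Finset.range N, |term m| = ∑ m ∈ s₁, |term m| + ∑ m ∈ s₂, |term m| :=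
    (Finset.sum_filter_add_sum_filter_not _ _ _).symm
  have A1 : ∑ m ∈ s₁, |term m| ≤ 3 * L := by
    have hcard : ((s₁.card : ℝ)) ≤ 1 / (2 * h) + 1 := by
      apply card_le_of_spacing hh zero_le_one s₁
      intro m hm
      rw [hs₁, Finset.mem_filter] at hm
      constructor
      · positivity
      · have := hm.2; simp only [hc] at this ⊢; linarith
    calc ∑ m ∈ s₁, |term m| ≤ ∑ _m ∈ s₁, 2 * L * h :=
          Finset.sum_le_sum (fun m _ => bound1 m)
      _ = (s₁.card : ℝ) * (2 * L * h) := by rw [Finset.sum_const, nsmul_eq_mul]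
      _ ≤ (1 / (2 * h) + 1) * (2 * L * h) := by
          apply mul_le_mul_of_nonneg_right hcard (by positivity)
      _ = L + 2 * L * h := by field_simp
      _ ≤ 3 * L := by nlinarith
  have A2 : ∑ m ∈ s₂, |term m| ≤ 2 * B * (R + h) := by
    have key : ∀ m ∈ s₂, |term m| ≤ h * |φ (a - c m)| + h * |φ (a + c m)| := by
      intro m hm
      rw [hs₂, Finset.mem_filter] at hm
      exact bound2 m (le_of_not_ge hm.2)
    calc ∑ m ∈ s₂, |term m|
        ≤ ∑ m ∈ s₂, (h * |φ (a - c m)| + h * |φ (a + c m)|) := Finset.sum_le_sum key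
      _ = ∑ m ∈ s₂, h * |φ (a - c m)| + ∑ m ∈ s₂, h * |φ (a + c m)| := Finset.sum_add_distrib
      _ ≤ B * (R + h) + B * (R + h) := by
          have h1 := hsum_phi s₂ true
          have h2 := hsum_phi s₂ false
          simp only [if_true, Bool.false_eq_true, if_false] at h1 h2
          linarith
      _ = 2 * B * (R + h) := by ring
  have A3 : ∑ m ∈ Finset.range N, c m * |term m| ≤ 2 * B * (R + h) := by
    calc ∑ m ∈ Finset.range N, c m * |term m|
        ≤ ∑ m ∈ Finset.range N, (h * |φ (a - c m)| + h * |φ (a + c m)|) :=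
          Finset.sum_le_sum (fun m _ => bound3 m)
      _ = ∑ m ∈ Finset.range N, h * |φ (a - c m)| + ∑ m ∈ Finset.range N, h * |φ (a + c m)| :=
          Finset.sum_add_distrib
      _ ≤ B * (R + h) + B * (R + h) := by
          have h1 := hsum_phi (Finset.range N) true
          have h2 := hsum_phi (Finset.range N) false
          simp only [if_true, Bool.false_eq_true, if_false] at h1 h2
          linarith
      _ = 2 * B * (R + h) := by ring
  have C1 : ∑ m ∈ Finset.range N, |term m| ≤ 3 * L + 2 * B * (R + h) := by
    rw [hsplit]; linarith
  -- pointwise decay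
  have hptwise : ∀ m : ℕ, (1 + |a|) * |term m| ≤ (1 + R) * |term m| + c m * |term m| := by
    intro m
    rcases eq_or_ne (term m) 0 with h0 | h0
    · rw [h0, abs_zero, mul_zero, mul_zero, mul_zero]; norm_num
    · have hnum : φ (a - c m) ≠ 0 ∨ φ (a + c m) ≠ 0 := by
        by_contra hcon
        push_neg at hcon
        apply h0
        show (φ (a - c m) - φ (a + c m)) / (2 * (m:ℝ) + 1) = 0
        rw [hcon.1, hcon.2, sub_zero, zero_div]
      have hA : |a| ≤ R + c m := by
        rcases hnum with h1 | h1
        · have h2 : |a - c m| ≤ R := by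
            by_contra hgt; exact h1 (hsupp _ (lt_of_not_ge hgt))
          rw [abs_le] at h2
          obtain ⟨hl, hr⟩ := h2
          rw [abs_le]
          constructor <;> linarith [hcpos m]
        · have h2 : |a + c m| ≤ R := by
            by_contra hgt; exact h1 (hsupp _ (lt_of_not_ge hgt))
          rw [abs_le] at h2
          obtain ⟨hl, hr⟩ := h2
          rw [abs_le]
          constructor <;> linarith [hcpos m]
      have := abs_nonneg (term m)
      nlinarith
  -- combine
  have hfinal : (1 + |a|) * |Tsum φ h a| ≤
      (1 + R) * (3 * L + 2 * B * (R + h)) + 2 * B * (R + h) := by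
    have habs_sum : |Tsum φ h a| ≤ ∑ m ∈ Finset.range N, |term m| := by
      rw [htsum]; exact Finset.abs_sum_le_sum_abs _ _
    calc (1 + |a|) * |Tsum φ h a| ≤ (1 + |a|) * ∑ m ∈ Finset.range N, |term m| := by
          have h1 : (0:ℝ) ≤ 1 + |a| := by positivity
          nlinarith
      _ = ∑ m ∈ Finset.range N, (1 + |a|) * |term m| := Finset.mul_sum _ _ _
      _ ≤ ∑ m ∈ Finset.range N, ((1 + R) * |term m| + c m * |term m|) :=
          Finset.sum_le_sum (fun m _ => hptwise m)
      _ = (1 + R) * ∑ m ∈ Finset.range N, |term m| + ∑ m ∈ Finset.range N, c m * |term m| := by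
          rw [Finset.sum_add_distrib, ← Finset.mul_sum]
      _ ≤ (1 + R) * (3 * L + 2 * B * (R + h)) + 2 * B * (R + h) := by
          have h2 : (0:ℝ) ≤ 1 + R := by positivity
          nlinarith
  rw [le_div_iff₀ (by positivity : (0:ℝ) < 1 + |a|)]
  calc |Tsum φ h a| * (1 + |a|) = (1 + |a|) * |Tsum φ h a| := by ring
    _ ≤ (1 + R) * (3 * L + 2 * B * (R + h)) + 2 * B * (R + h) := hfinal
    _ ≤ (1 + R) * (3 * L + 2 * B * (R + 1)) + 2 * B * (R + 1) := by
        have e1 : 2 * B * (R + h) ≤ 2 * B * (R + 1) := by nlinarith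
        have e2 : (1 + R) * (3 * L + 2 * B * (R + h)) ≤ (1 + R) * (3 * L + 2 * B * (R + 1)) := by
          apply mul_le_mul_of_nonneg_left (by linarith) (by positivity)
        linarith

section gker

variable {φ : ℝ → ℝ} (hdiff : Differentiable ℝ φ) (hcont : Continuous (deriv φ))

include hdiff hcont

lemma gker_eq (a : ℝ) {y : ℝ} (hy : y ≠ 0) :
    gker φ a y = (φ (a - y) - φ (a + y)) / y := by
  have hsub : ∫ s in (-1:ℝ)..1, y • deriv φ (a + s * y)
      = ∫ u in (a + (-1:ℝ) * y)..(a + 1 * y), deriv φ u := by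
    exact intervalIntegral.integral_comp_smul_deriv
      (f := fun s : ℝ => a + s * y) (f' := fun _ => y) (g := deriv φ)
      (fun s _ => by simpa using ((hasDerivAt_mul_const y).const_add a (x := s)))
      continuousOn_const hcont
  have hftc : ∫ u in (a + (-1:ℝ) * y)..(a + 1 * y), deriv φ u = φ (a + y) - φ (a - y) := by
    rw [intervalIntegral.integral_deriv_eq_sub (fun u _ => hdiff u)
      (hcont.intervalIntegrable _ _)]
    ring_nf
  have hsmul : ∫ s in (-1:ℝ)..1, y • deriv φ (a + s * y)
      = y * ∫ s in (-1:ℝ)..1, deriv φ (a + s * y) := by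
    rw [intervalIntegral.integral_smul, smul_eq_mul]
  have hkey : y * ∫ s in (-1:ℝ)..1, deriv φ (a + s * y) = φ (a + y) - φ (a - y) := by
    rw [← hsmul, hsub, hftc]
  rw [gker]
  field_simp
  linarith [hkey]

omit hdiff in
lemma gker_lipschitz {K2 : ℝ} (hK2 : 0 ≤ K2)
    (hlip2 : ∀ u v, |deriv φ u - deriv φ v| ≤ K2 * |u - v|)
    (a a' y y' : ℝ) :
    |gker φ a y - gker φ a' y'| ≤ 2 * K2 * (|a - a'| + |y - y'|) := by
  have hF : Continuous (fun s : ℝ => deriv φ (a + s * y)) :=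
    hcont.comp (continuous_const.add (continuous_id.mul continuous_const))
  have hG : Continuous (fun s : ℝ => deriv φ (a' + s * y')) :=
    hcont.comp (continuous_const.add (continuous_id.mul continuous_const))
  have hdiffint : gker φ a y - gker φ a' y'
      = -∫ s in (-1:ℝ)..1, (deriv φ (a + s * y) - deriv φ (a' + s * y')) := by
    rw [gker, gker, intervalIntegral.integral_sub (hF.intervalIntegrable _ _)
      (hG.intervalIntegrable _ _)]
    ring
  rw [hdiffint, abs_neg]
  have hb := intervalIntegral.norm_integral_le_of_norm_le_const
    (C := K2 * (|a - a'| + |y - y'|))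
    (f := fun s : ℝ => deriv φ (a + s * y) - deriv φ (a' + s * y'))
    (a := (-1:ℝ)) (b := 1) ?_
  · rw [Real.norm_eq_abs] at hb
    calc |∫ s in (-1:ℝ)..1, (deriv φ (a + s * y) - deriv φ (a' + s * y'))|
        ≤ K2 * (|a - a'| + |y - y'|) * |1 - (-1:ℝ)| := hb
      _ = 2 * K2 * (|a - a'| + |y - y'|) := by norm_num; ring
  · intro s hs
    have hs1 : |s| ≤ 1 := by
      rw [Set.uIoc_of_le (by norm_num : (-1:ℝ) ≤ 1)] at hs
      rw [abs_le]
      exact ⟨le_of_lt hs.1, hs.2⟩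
    rw [Real.norm_eq_abs]
    calc |deriv φ (a + s * y) - deriv φ (a' + s * y')|
        ≤ K2 * |(a + s * y) - (a' + s * y')| := hlip2 _ _
      _ ≤ K2 * (|a - a'| + |y - y'|) := by
          apply mul_le_mul_of_nonneg_left ?_ hK2
          calc |(a + s * y) - (a' + s * y')| = |(a - a') + s * (y - y')| := by ring_nf
            _ ≤ |a - a'| + |s * (y - y')| := abs_add_le _ _
            _ = |a - a'| + |s| * |y - y'| := by rw [abs_mul]
            _ ≤ |a - a'| + 1 * |y - y'| := by
                have := abs_nonneg (y - y')
                nlinarith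
            _ = |a - a'| + |y - y'| := by ring

lemma gker_continuous {K2 : ℝ} (hK2 : 0 ≤ K2)
    (hlip2 : ∀ u v, |deriv φ u - deriv φ v| ≤ K2 * |u - v|) (a : ℝ) :
    Continuous (gker φ a) := by
  have : LipschitzWith (Real.toNNReal (2 * K2)) (gker φ a) := by
    apply LipschitzWith.of_dist_le_mul
    intro u v
    rw [Real.dist_eq, Real.dist_eq]
    calc |gker φ a u - gker φ a v| ≤ 2 * K2 * (|a - a| + |u - v|) :=
          gker_lipschitz hcont hK2 hlip2 a a u v
      _ = 2 * K2 * |u - v| := by rw [sub_self, abs_zero, zero_add]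
      _ ≤ (Real.toNNReal (2 * K2) : ℝ) * |u - v| := by
          rw [Real.coe_toNNReal _ (by positivity)]
  exact this.continuous

lemma gker_vanish {R : ℝ} (hR : 0 ≤ R) (hsupp : ∀ z, R < |z| → φ z = 0)
    (a : ℝ) {y : ℝ} (hy : R + |a| < y) : gker φ a y = 0 := by
  have hy0 : y ≠ 0 := by
    have := abs_nonneg a; intro h0; rw [h0] at hy; linarith
  rw [gker_eq hdiff hcont a hy0]
  have h1 : φ (a - y) = 0 := by
    apply hsupp
    have : |a - y| ≥ |y| - |a| := by
      have := abs_sub_abs_le_abs_sub y a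
      rw [abs_sub_comm] at this; linarith
    rw [abs_of_pos (by linarith [abs_nonneg a] : 0 < y)] at this
    linarith
  have h2 : φ (a + y) = 0 := by
    apply hsupp
    have h3 : |a + y| ≥ |y| - |a| := by
      have := abs_add_le (a + y) (-a)
      simp only [add_neg_cancel_comm] at this
      rw [abs_neg] at this; linarith
    rw [abs_of_pos (by linarith [abs_nonneg a] : 0 < y)] at h3
    linarith
  rw [h1, h2, sub_zero, zero_div]

end gker

section estimates

variable {φ : ℝ → ℝ} {K2 R : ℝ}
  (hdiff : Differentiable ℝ φ) (hcont : Continuous (deriv φ))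
  (hK2 : 0 ≤ K2) (hlip2 : ∀ u v, |deriv φ u - deriv φ v| ≤ K2 * |u - v|)
  (hR : 1 ≤ R) (hsupp : ∀ z, R < |z| → φ z = 0)

include hdiff hcont hK2 hlip2 hR hsupp

lemma integrableOn_gker (a : ℝ) {M : ℝ} (hM : R + |a| < M) :
    IntegrableOn (gker φ a) (Set.Ioi (0:ℝ)) := by
  have hM0 : (0:ℝ) < M := by
    have := abs_nonneg a; linarith [hR]
  have h1 : IntegrableOn (gker φ a) (Set.Ioc 0 M) :=
    (gker_continuous hdiff hcont hK2 hlip2 a).integrableOn_Ioc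
  have h2 : IntegrableOn (gker φ a) (Set.Ioi M) := by
    rw [integrableOn_congr_fun (g := fun _ => (0:ℝ)) ?_ measurableSet_Ioi]
    · exact integrableOn_zero
    · intro y hy
      exact gker_vanish hdiff hcont (by linarith : (0:ℝ) ≤ R) hsupp a (lt_of_lt_of_le hM (le_of_lt hy))
  have := h1.union h2
  rwa [Set.Ioc_union_Ioi_eq_Ioi (le_of_lt hM0)] at this

omit hdiff hcont hK2 hlip2 hR hsupp in
lemma Ioi_cover {h : ℝ} (hh : 0 < h) :
    Set.Ioi (0:ℝ) = ⋃ m : ℕ, Set.Ioc (2*(m:ℝ)*h) (2*(m:ℝ)*h + 2*h) := by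
  ext y
  simp only [Set.mem_Ioi, Set.mem_iUnion, Set.mem_Ioc]
  constructor
  · intro hy
    set n : ℕ := ⌈y / (2*h)⌉₊ with hn
    have hn1 : 1 ≤ n := by
      rw [hn]
      exact Nat.one_le_ceil_iff.mpr (by positivity)
    refine ⟨n - 1, ?_, ?_⟩
    · have hlt : ((n - 1 : ℕ) : ℝ) < y / (2*h) := by
        rw [← Nat.lt_ceil]
        omega
      have : ((n - 1 : ℕ) : ℝ) * (2*h) < y := by
        rw [← lt_div_iff₀ (by positivity)]
        exact hlt
      linarith [this]
    · have hle : y / (2*h) ≤ (n : ℝ) := Nat.le_ceil _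
      have h2 : y ≤ (n:ℝ) * (2*h) := by
        rw [← div_le_iff₀ (by positivity)]
        exact hle
      have hcast : ((n - 1 : ℕ) : ℝ) = (n:ℝ) - 1 := by
        rw [Nat.cast_sub hn1]; norm_num
      rw [hcast]; linarith
  · rintro ⟨m, hm1, _⟩
    have : (0:ℝ) ≤ 2*(m:ℝ)*h := by positivity
    linarith

omit hdiff hcont hK2 hlip2 hR hsupp in
lemma Ioc_pairwise_disjoint {h : ℝ} (hh : 0 < h) :
    Pairwise (Function.onFun Disjoint (fun m : ℕ => Set.Ioc (2*(m:ℝ)*h) (2*(m:ℝ)*h + 2*h))) := by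
  intro m n hmn
  apply Set.Ioc_disjoint_Ioc.mpr
  rcases lt_or_gt_of_ne hmn with h' | h'
  · have : (m:ℝ) + 1 ≤ (n:ℝ) := by exact_mod_cast h'
    calc min (2*(m:ℝ)*h + 2*h) (2*(n:ℝ)*h + 2*h) ≤ 2*(m:ℝ)*h + 2*h := min_le_left _ _
      _ ≤ 2*(n:ℝ)*h := by nlinarith
      _ ≤ max (2*(m:ℝ)*h) (2*(n:ℝ)*h) := le_max_right _ _
  · have : (n:ℝ) + 1 ≤ (m:ℝ) := by exact_mod_cast h'
    calc min (2*(m:ℝ)*h + 2*h) (2*(n:ℝ)*h + 2*h) ≤ 2*(n:ℝ)*h + 2*h := min_le_right _ _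
      _ ≤ 2*(m:ℝ)*h := by nlinarith
      _ ≤ max (2*(m:ℝ)*h) (2*(n:ℝ)*h) := le_max_left _ _

lemma midpoint_est (a : ℝ) {M h : ℝ} (hMa : R + |a| < M) (hh : 0 < h) (hh1 : h ≤ 1) :
    |(∑' m : ℕ, h * gker φ a ((2*(m:ℝ)+1)*h)) * 2 - ∫ y in Set.Ioi (0:ℝ), gker φ a y|
      ≤ 2 * K2 * (M + 4) * h := by
  have hM0 : (0:ℝ) < M := by have := abs_nonneg a; linarith [hR]
  set N : ℕ := ⌊M / (2*h)⌋₊ + 1 with hN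
  have hNM : M < 2*(N:ℝ)*h := by
    have h1 : M / (2*h) < (N:ℝ) := by
      rw [hN]; push_cast; exact Nat.lt_floor_add_one _
    calc M = (M / (2*h)) * (2*h) := by field_simp
      _ < (N:ℝ) * (2*h) := mul_lt_mul_of_pos_right h1 (by positivity)
      _ = 2*(N:ℝ)*h := by ring
  have hNle : (N:ℝ) ≤ M / (2*h) + 1 := by
    rw [hN]; push_cast
    have := Nat.floor_le (by positivity : (0:ℝ) ≤ M / (2*h))
    linarith
  -- vanishing beyond N
  have hvan1 : ∀ m : ℕ, N ≤ m → h * gker φ a ((2*(m:ℝ)+1)*h) = 0 := by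
    intro m hm
    have hmN : (N:ℝ) ≤ (m:ℝ) := by exact_mod_cast hm
    have : R + |a| < (2*(m:ℝ)+1)*h := by nlinarith
    rw [gker_vanish hdiff hcont (by linarith : (0:ℝ) ≤ R) hsupp a this, mul_zero]
  have hvan2 : ∀ m : ℕ, N ≤ m →
      ∫ y in Set.Ioc (2*(m:ℝ)*h) (2*(m:ℝ)*h + 2*h), gker φ a y = 0 := by
    intro m hm
    have hmN : (N:ℝ) ≤ (m:ℝ) := by exact_mod_cast hm
    rw [setIntegral_congr_fun measurableSet_Ioc (g := fun _ => (0:ℝ)) ?_, integral_zero]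
    intro y hy
    apply gker_vanish hdiff hcont (by linarith : (0:ℝ) ≤ R) hsupp a
    have : 2*(m:ℝ)*h ≥ 2*(N:ℝ)*h := by nlinarith
    have hy1 := hy.1
    linarith
  -- per interval error
  have hper : ∀ m : ℕ,
      |(∫ y in Set.Ioc (2*(m:ℝ)*h) (2*(m:ℝ)*h + 2*h), gker φ a y)
        - 2*h * gker φ a ((2*(m:ℝ)+1)*h)| ≤ 4 * K2 * h^2 := by
    intro m
    set I : Set ℝ := Set.Ioc (2*(m:ℝ)*h) (2*(m:ℝ)*h + 2*h) with hI
    have hvol : volume I = ENNReal.ofReal (2*h) := by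
      rw [hI, Real.volume_Ioc]
      congr 1; ring
    have hvolfin : volume I < ⊤ := by rw [hvol]; exact ENNReal.ofReal_lt_top
    have hconst : ∫ _y in I, gker φ a ((2*(m:ℝ)+1)*h) = 2*h * gker φ a ((2*(m:ℝ)+1)*h) := by
      rw [setIntegral_const, measureReal_def, hvol, ENNReal.toReal_ofReal (by linarith : (0:ℝ) ≤ 2*h), smul_eq_mul]
    have hint : IntegrableOn (gker φ a) I := (gker_continuous hdiff hcont hK2 hlip2 a).integrableOn_Ioc
    have hsub : (∫ y in I, gker φ a y) - 2*h * gker φ a ((2*(m:ℝ)+1)*h)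
        = ∫ y in I, (gker φ a y - gker φ a ((2*(m:ℝ)+1)*h)) := by
      rw [integral_sub hint ((integrableOn_const_iff).mpr (Or.inr hvolfin)), hconst]
    rw [hsub]
    have hb := norm_setIntegral_le_of_norm_le_const (μ := volume) (s := I)
      (f := fun y => gker φ a y - gker φ a ((2*(m:ℝ)+1)*h)) (C := 2 * K2 * h) hvolfin ?_
    · rw [Real.norm_eq_abs] at hb
      calc |∫ y in I, (gker φ a y - gker φ a ((2*(m:ℝ)+1)*h))|
          ≤ 2 * K2 * h * (volume I).toReal := hb
        _ = 2 * K2 * h * (2*h) := by rw [hvol, ENNReal.toReal_ofReal (by linarith : (0:ℝ) ≤ 2*h)]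
        _ = 4 * K2 * h^2 := by ring
    · intro y hy
      rw [Real.norm_eq_abs]
      calc |gker φ a y - gker φ a ((2*(m:ℝ)+1)*h)|
          ≤ 2 * K2 * (|a - a| + |y - (2*(m:ℝ)+1)*h|) := gker_lipschitz hcont hK2 hlip2 a a y _
        _ = 2 * K2 * |y - (2*(m:ℝ)+1)*h| := by rw [sub_self, abs_zero, zero_add]
        _ ≤ 2 * K2 * h := by
            apply mul_le_mul_of_nonneg_left ?_ (by linarith [hK2] : (0:ℝ) ≤ 2 * K2)
            rw [hI, Set.mem_Ioc] at hy
            rw [abs_le]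
            constructor <;> [linarith [hy.1]; linarith [hy.2]]
  -- assemble
  have hcover := Ioi_cover (h := h) hh
  have hsumint : ∫ y in Set.Ioi (0:ℝ), gker φ a y
      = ∑' m : ℕ, ∫ y in Set.Ioc (2*(m:ℝ)*h) (2*(m:ℝ)*h + 2*h), gker φ a y := by
    rw [hcover]
    exact integral_iUnion (fun m => measurableSet_Ioc) (Ioc_pairwise_disjoint hh)
      (by rw [← hcover]; exact integrableOn_gker hdiff hcont hK2 hlip2 hR hsupp a hMa)
  have ht1 : ∑' m : ℕ, h * gker φ a ((2*(m:ℝ)+1)*h)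
      = ∑ m ∈ Finset.range N, h * gker φ a ((2*(m:ℝ)+1)*h) :=
    tsum_eq_sum (fun m hm => hvan1 m (Nat.le_of_not_lt (fun hlt => hm (Finset.mem_range.mpr hlt))))
  have ht2 : ∑' m : ℕ, (∫ y in Set.Ioc (2*(m:ℝ)*h) (2*(m:ℝ)*h + 2*h), gker φ a y)
      = ∑ m ∈ Finset.range N, ∫ y in Set.Ioc (2*(m:ℝ)*h) (2*(m:ℝ)*h + 2*h), gker φ a y :=
    tsum_eq_sum (fun m hm => hvan2 m (Nat.le_of_not_lt (fun hlt => hm (Finset.mem_range.mpr hlt))))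
  rw [hsumint, ht1, ht2]
  have hre : (∑ m ∈ Finset.range N, h * gker φ a ((2*(m:ℝ)+1)*h)) * 2
        - ∑ m ∈ Finset.range N, (∫ y in Set.Ioc (2*(m:ℝ)*h) (2*(m:ℝ)*h + 2*h), gker φ a y)
      = ∑ m ∈ Finset.range N, (2*h* gker φ a ((2*(m:ℝ)+1)*h)
          - ∫ y in Set.Ioc (2*(m:ℝ)*h) (2*(m:ℝ)*h + 2*h), gker φ a y) := by
    rw [Finset.sum_sub_distrib]
    congr 1
    rw [Finset.sum_mul]
    apply Finset.sum_congr rfl; intro m _; ring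
  rw [hre]
  calc |∑ m ∈ Finset.range N, (2*h* gker φ a ((2*(m:ℝ)+1)*h)
          - ∫ y in Set.Ioc (2*(m:ℝ)*h) (2*(m:ℝ)*h + 2*h), gker φ a y)|
      ≤ ∑ m ∈ Finset.range N, |2*h* gker φ a ((2*(m:ℝ)+1)*h)
          - ∫ y in Set.Ioc (2*(m:ℝ)*h) (2*(m:ℝ)*h + 2*h), gker φ a y| :=
        Finset.abs_sum_le_sum_abs _ _
    _ ≤ ∑ _m ∈ Finset.range N, 4 * K2 * h^2 := by
        apply Finset.sum_le_sum
        intro m _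
        rw [abs_sub_comm]
        exact hper m
    _ = (N:ℝ) * (4 * K2 * h^2) := by rw [Finset.sum_const, Finset.card_range, nsmul_eq_mul]
    _ ≤ (M / (2*h) + 1) * (4 * K2 * h^2) := by
        apply mul_le_mul_of_nonneg_right hNle
        nlinarith [hK2, sq_nonneg h]
    _ = 2 * K2 * M * h + 4 * K2 * h^2 := by field_simp; ring
    _ ≤ 2 * K2 * (M + 4) * h := by
        nlinarith [mul_nonneg (mul_nonneg hK2 hh.le) (by linarith : (0:ℝ) ≤ 2 - h)]
  done

end estimates

section sec2

variable {φ : ℝ → ℝ} {K2 R L : ℝ}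

variable
  (hdiff : Differentiable ℝ φ) (hcont : Continuous (deriv φ))
  (hK2 : 0 ≤ K2) (hlip2 : ∀ u v, |deriv φ u - deriv φ v| ≤ K2 * |u - v|)
  (hL : 0 ≤ L) (hlip : ∀ u v, |φ u - φ v| ≤ L * |u - v|)
  (hR : 1 ≤ R) (hsupp : ∀ z, R < |z| → φ z = 0)

include hL hlip hR hsupp in
lemma Gx_integrable (x : ℝ) :
    IntegrableOn (fun y => (φ (x - y) - φ (x + y)) / y) (Set.Ioi (0:ℝ)) := by
  set G : ℝ → ℝ := fun y => (φ (x - y) - φ (x + y)) / y with hG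
  have hphic : Continuous φ := by
    have : LipschitzWith (Real.toNNReal L) φ := by
      apply LipschitzWith.of_dist_le_mul
      intro u v
      rw [Real.dist_eq, Real.dist_eq]
      calc |φ u - φ v| ≤ L * |u - v| := hlip u v
        _ ≤ (Real.toNNReal L : ℝ) * |u - v| := by
            rw [Real.coe_toNNReal _ hL]
    exact this.continuous
  have hGmeas : Measurable G := by
    apply Measurable.div
    · exact ((hphic.comp (continuous_const.sub continuous_id)).sub
        (hphic.comp (continuous_const.add continuous_id))).measurable
    · exact measurable_id
  have hGbd : ∀ y, |G y| ≤ 2 * L := by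
    intro y
    rcases eq_or_ne y 0 with rfl | hy
    · simp only [hG, div_zero, abs_zero]
      positivity
    · rw [hG]
      simp only
      rw [abs_div]
      rw [div_le_iff₀ (abs_pos.mpr hy)]
      calc |φ (x - y) - φ (x + y)| ≤ L * |(x - y) - (x + y)| := hlip _ _
        _ = L * (2 * |y|) := by
            rw [show (x - y) - (x + y) = -(2*y) from by ring, abs_neg, abs_mul]
            norm_num
        _ = 2 * L * |y| := by ring
  set M : ℝ := R + |x| + 1 with hM
  have hM0 : 0 < M := by have := abs_nonneg x; rw [hM]; linarith
  have h1 : IntegrableOn G (Set.Ioc 0 M) := by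
    apply Integrable.mono' (g := fun _ => 2 * L)
    · exact (integrableOn_const_iff).mpr (Or.inr (by rw [Real.volume_Ioc]; exact ENNReal.ofReal_lt_top))
    · exact (hGmeas.aestronglyMeasurable).restrict
    · exact Eventually.of_forall (fun y => by rw [Real.norm_eq_abs]; exact hGbd y)
  have h2 : IntegrableOn G (Set.Ioi M) := by
    rw [integrableOn_congr_fun (g := fun _ => (0:ℝ)) ?_ measurableSet_Ioi]
    · exact integrableOn_zero
    · intro y hy
      rw [Set.mem_Ioi] at hy
      have hy0 : 0 < y := lt_trans hM0 hy
      have hz1 : φ (x - y) = 0 := by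
        apply hsupp
        rw [abs_sub_comm]
        have h3 : |y - x| ≥ |y| - |x| := abs_sub_abs_le_abs_sub y x
        rw [abs_of_pos hy0] at h3
        linarith
      have hz2 : φ (x + y) = 0 := by
        apply hsupp
        have h3 : |x + y| ≥ |y| - |x| := by
          have := abs_add_le (x + y) (-x)
          simp only [add_neg_cancel_comm] at this
          rw [abs_neg] at this; linarith
        rw [abs_of_pos hy0] at h3
        linarith
      rw [hG]; simp only; rw [hz1, hz2, sub_zero, zero_div]
  have := h1.union h2
  rwa [Set.Ioc_union_Ioi_eq_Ioi (le_of_lt hM0)] at this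

include hL hlip hR hsupp in
lemma Hphi_eq (Hφ : ℝ → ℝ)
    (hH : ∀ x : ℝ, Tendsto
      (fun ε : ℝ => (1 / Real.pi) * ∫ y in Set.Ioi ε, (φ (x - y) - φ (x + y)) / y)
      (nhdsWithin 0 (Set.Ioi 0)) (nhds (Hφ x))) (x : ℝ) :
    Hφ x = (1 / Real.pi) * ∫ y in Set.Ioi (0:ℝ), (φ (x - y) - φ (x + y)) / y := by
  set G : ℝ → ℝ := fun y => (φ (x - y) - φ (x + y)) / y with hG
  have hint : IntegrableOn G (Set.Ioi (0:ℝ)) := Gx_integrable hL hlip hR hsupp x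
  have hphic : Continuous φ := by
    have : LipschitzWith (Real.toNNReal L) φ := by
      apply LipschitzWith.of_dist_le_mul
      intro u v
      rw [Real.dist_eq, Real.dist_eq]
      calc |φ u - φ v| ≤ L * |u - v| := hlip u v
        _ ≤ (Real.toNNReal L : ℝ) * |u - v| := by
            rw [Real.coe_toNNReal _ hL]
    exact this.continuous
  have hGmeas : Measurable G := by
    apply Measurable.div
    · exact ((hphic.comp (continuous_const.sub continuous_id)).sub
        (hphic.comp (continuous_const.add continuous_id))).measurable
    · exact measurable_id
  have hGbd : ∀ y ∈ Set.Ioc (0:ℝ) 1, ‖G y‖ ≤ 2 * L := by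
    intro y hy
    rw [Real.norm_eq_abs, hG]
    simp only
    rw [abs_div, div_le_iff₀ (abs_pos.mpr (ne_of_gt hy.1))]
    calc |φ (x - y) - φ (x + y)| ≤ L * |(x - y) - (x + y)| := hlip _ _
      _ = L * (2 * |y|) := by
          rw [show (x - y) - (x + y) = -(2*y) from by ring, abs_neg, abs_mul]; norm_num
      _ = 2 * L * |y| := by ring
  have key : Tendsto (fun ε : ℝ => ∫ y in Set.Ioi ε, G y) (nhdsWithin 0 (Set.Ioi 0))
      (nhds (∫ y in Set.Ioi (0:ℝ), G y)) := by
    rw [tendsto_iff_dist_tendsto_zero]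
    apply squeeze_zero' (Eventually.of_forall (fun _ => dist_nonneg))
      (g := fun ε => 2 * L * ε) ?_ ?_
    · filter_upwards [Ioc_mem_nhdsGT_of_mem (Set.mem_Ico.mpr ⟨le_refl (0:ℝ), zero_lt_one⟩)]
      intro ε hε
      obtain ⟨hε0, hε1⟩ := hε
      have hioc : IntegrableOn G (Set.Ioc 0 ε) := hint.mono_set Set.Ioc_subset_Ioi_self
      have hioi : IntegrableOn G (Set.Ioi ε) := hint.mono_set (Set.Ioi_subset_Ioi hε0.le)
      have hsplit : ∫ y in Set.Ioi (0:ℝ), G y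
          = (∫ y in Set.Ioc 0 ε, G y) + ∫ y in Set.Ioi ε, G y := by
        rw [← setIntegral_union (Set.Ioc_disjoint_Ioi le_rfl) measurableSet_Ioi hioc hioi,
          Set.Ioc_union_Ioi_eq_Ioi hε0.le]
      have hvol : volume (Set.Ioc (0:ℝ) ε) < ⊤ := by
        rw [Real.volume_Ioc]; exact ENNReal.ofReal_lt_top
      have hbd := norm_setIntegral_le_of_norm_le_const (μ := volume) (s := Set.Ioc (0:ℝ) ε)
        (f := G) (C := 2 * L) hvol
        (fun y hy => hGbd y (Set.mem_Ioc.mpr ⟨hy.1, le_trans hy.2 hε1⟩))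
      rw [Real.norm_eq_abs] at hbd
      calc dist (∫ y in Set.Ioi ε, G y) (∫ y in Set.Ioi (0:ℝ), G y)
          = |∫ y in Set.Ioc 0 ε, G y| := by
            rw [Real.dist_eq, hsplit]
            rw [show (∫ y in Set.Ioi ε, G y) - ((∫ y in Set.Ioc 0 ε, G y)
              + ∫ y in Set.Ioi ε, G y) = -(∫ y in Set.Ioc 0 ε, G y) from by ring, abs_neg]
        _ ≤ 2 * L * (volume (Set.Ioc (0:ℝ) ε)).toReal := hbd
        _ = 2 * L * ε := by
            rw [Real.volume_Ioc, ENNReal.toReal_ofReal (by linarith)]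
            norm_num
    · have : Tendsto (fun ε : ℝ => 2 * L * ε) (nhds 0) (nhds (2 * L * 0)) :=
        (continuous_const.mul continuous_id).tendsto 0
      rw [mul_zero] at this
      exact this.mono_left nhdsWithin_le_nhds
  exact tendsto_nhds_unique (hH x) (key.const_mul (1 / Real.pi))

include hdiff hcont hK2 hlip2 hL hlip hR hsupp in
lemma pointwise_conv (Hφ : ℝ → ℝ)
    (hH : ∀ x : ℝ, Tendsto
      (fun ε : ℝ => (1 / Real.pi) * ∫ y in Set.Ioi ε, (φ (x - y) - φ (x + y)) / y)
      (nhdsWithin 0 (Set.Ioi 0)) (nhds (Hφ x))) (x : ℝ) :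
    Tendsto (fun h : ℝ => hDx h φ x) (nhdsWithin 0 (Set.Ioi 0)) (nhds (Hφ x)) := by
  set Mx : ℝ := R + |x| + 2 with hMx
  set Cx : ℝ := 2*K2*(Mx+4) + 2*K2*Mx with hCx
  have hMx0 : 0 < Mx := by have := abs_nonneg x; rw [hMx]; linarith
  have hRx : R + |x| < Mx := by rw [hMx]; linarith
  have hπ : 0 < Real.pi := Real.pi_pos
  have hstep5 : Hφ x = (1/Real.pi) * ∫ y in Set.Ioi (0:ℝ), gker φ x y := by
    rw [Hphi_eq hL hlip hR hsupp Hφ hH x]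
    congr 1
    apply setIntegral_congr_fun measurableSet_Ioi
    intro y hy
    exact (gker_eq hdiff hcont x (ne_of_gt hy)).symm
  have hsplit0 : ∀ b : ℝ, R + |b| < Mx →
      (∫ y in Set.Ioi (0:ℝ), gker φ b y) = ∫ y in Set.Ioc (0:ℝ) Mx, gker φ b y := by
    intro b hb
    have hioc : IntegrableOn (gker φ b) (Set.Ioc 0 Mx) :=
      (gker_continuous hdiff hcont hK2 hlip2 b).integrableOn_Ioc
    have hvan : ∀ y ∈ Set.Ioi Mx, gker φ b y = (fun _ => (0:ℝ)) y := by
      intro y hy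
      exact gker_vanish hdiff hcont (by linarith : (0:ℝ) ≤ R) hsupp b
        (lt_trans hb hy)
    have hioi : IntegrableOn (gker φ b) (Set.Ioi Mx) := by
      rw [integrableOn_congr_fun hvan measurableSet_Ioi]
      exact integrableOn_zero
    have hioi0 : ∫ y in Set.Ioi Mx, gker φ b y = 0 := by
      rw [setIntegral_congr_fun measurableSet_Ioi hvan, integral_zero]
    rw [← Set.Ioc_union_Ioi_eq_Ioi hMx0.le,
      setIntegral_union (Set.Ioc_disjoint_Ioi le_rfl) measurableSet_Ioi hioc hioi,
      hioi0, add_zero]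
  have key : ∀ h : ℝ, 0 < h → h ≤ 1 → |hDx h φ x - Hφ x| ≤ Cx * h := by
    intro h hh hh1
    set a : ℝ := (⌊x/h⌋ : ℝ) * h with ha
    have hfl : (⌊x/h⌋:ℝ) ≤ x/h := Int.floor_le _
    have hfl2 : x/h < ⌊x/h⌋ + 1 := Int.lt_floor_add_one _
    have hax : a ≤ x := by
      rw [ha]
      calc (⌊x/h⌋:ℝ) * h ≤ (x/h) * h := mul_le_mul_of_nonneg_right hfl hh.le
        _ = x := by field_simp
    have hxa : x < a + h := by
      have h2 : x / h * h < ((⌊x/h⌋:ℝ) + 1) * h := mul_lt_mul_of_pos_right hfl2 hh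
      rw [div_mul_cancel₀ x (ne_of_gt hh)] at h2
      rw [ha]; linarith
    have hdax : |a - x| ≤ h := by rw [abs_le]; constructor <;> linarith
    have haabs : |a| ≤ |x| + 1 := by
      calc |a| = |(a - x) + x| := by ring_nf
        _ ≤ |a - x| + |x| := abs_add_le _ _
        _ ≤ |x| + 1 := by linarith
    have hRa : R + |a| < Mx := by rw [hMx]; linarith
    have step1 : hDx h φ x = (2/Real.pi) * Tsum φ h a :=
      hdisc_eq φ R hsupp hh ⌊x/h⌋
    have step2 : Tsum φ h a = ∑' m : ℕ, h * gker φ a ((2*(m:ℝ)+1)*h) := by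
      rw [Tsum]
      apply tsum_congr
      intro m
      have hc : (0:ℝ) < (2*(m:ℝ)+1)*h := by positivity
      rw [gker_eq hdiff hcont a (ne_of_gt hc)]
      have hm1 : (2*(m:ℝ)+1) ≠ 0 := by positivity
      field_simp
    have step3 := midpoint_est hdiff hcont hK2 hlip2 hR hsupp a (M := Mx) hRa hh hh1
    have step4 : |(∫ y in Set.Ioi (0:ℝ), gker φ a y) - ∫ y in Set.Ioi (0:ℝ), gker φ x y|
        ≤ 2*K2*h*Mx := by
      rw [hsplit0 a hRa, hsplit0 x hRx]
      have hia : IntegrableOn (gker φ a) (Set.Ioc 0 Mx) :=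
        (gker_continuous hdiff hcont hK2 hlip2 a).integrableOn_Ioc
      have hix : IntegrableOn (gker φ x) (Set.Ioc 0 Mx) :=
        (gker_continuous hdiff hcont hK2 hlip2 x).integrableOn_Ioc
      rw [← integral_sub hia hix]
      have hvol : volume (Set.Ioc (0:ℝ) Mx) < ⊤ := by
        rw [Real.volume_Ioc]; exact ENNReal.ofReal_lt_top
      have hbd := norm_setIntegral_le_of_norm_le_const (μ := volume) (s := Set.Ioc (0:ℝ) Mx)
        (f := fun y => gker φ a y - gker φ x y) (C := 2*K2*h) hvol ?_
      · rw [Real.norm_eq_abs] at hbd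
        calc |∫ y in Set.Ioc (0:ℝ) Mx, (gker φ a y - gker φ x y)|
            ≤ 2*K2*h * (volume (Set.Ioc (0:ℝ) Mx)).toReal := hbd
          _ = 2*K2*h*Mx := by
              rw [Real.volume_Ioc, ENNReal.toReal_ofReal (by linarith)]
              ring_nf
      · intro y _
        rw [Real.norm_eq_abs]
        calc |gker φ a y - gker φ x y| ≤ 2*K2*(|a - x| + |y - y|) :=
              gker_lipschitz hcont hK2 hlip2 a x y y
          _ = 2*K2*|a - x| := by rw [sub_self, abs_zero, add_zero]
          _ ≤ 2*K2*h := by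
              apply mul_le_mul_of_nonneg_left hdax (by linarith : (0:ℝ) ≤ 2*K2)
    calc |hDx h φ x - Hφ x|
        = |(1/Real.pi) * ((∑' m : ℕ, h * gker φ a ((2*(m:ℝ)+1)*h)) * 2
            - ∫ y in Set.Ioi (0:ℝ), gker φ x y)| := by
          rw [step1, step2, hstep5]; congr 1; ring
      _ = (1/Real.pi) * |(∑' m : ℕ, h * gker φ a ((2*(m:ℝ)+1)*h)) * 2
            - ∫ y in Set.Ioi (0:ℝ), gker φ x y| := by
          rw [abs_mul, abs_of_pos (by positivity : (0:ℝ) < 1/Real.pi)]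
      _ ≤ (1/Real.pi) * (2*K2*(Mx+4)*h + 2*K2*h*Mx) := by
          apply mul_le_mul_of_nonneg_left ?_ (by positivity)
          calc |(∑' m : ℕ, h * gker φ a ((2*(m:ℝ)+1)*h)) * 2
                - ∫ y in Set.Ioi (0:ℝ), gker φ x y|
              ≤ |(∑' m : ℕ, h * gker φ a ((2*(m:ℝ)+1)*h)) * 2
                  - ∫ y in Set.Ioi (0:ℝ), gker φ a y|
                + |(∫ y in Set.Ioi (0:ℝ), gker φ a y)
                  - ∫ y in Set.Ioi (0:ℝ), gker φ x y| := abs_sub_le _ _ _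
            _ ≤ 2*K2*(Mx+4)*h + 2*K2*h*Mx := add_le_add step3 step4
      _ ≤ Cx * h := by
          have h1pi : 1/Real.pi ≤ 1 := by
            rw [div_le_one hπ]; linarith [Real.pi_gt_three]
          have hs0 : (0:ℝ) ≤ 2*K2*(Mx+4)*h + 2*K2*h*Mx := by
            have e1 : (0:ℝ) ≤ 2*K2*(Mx+4)*h := by
              apply mul_nonneg (mul_nonneg (by linarith) (by linarith)) hh.le
            have e2 : (0:ℝ) ≤ 2*K2*h*Mx := by
              apply mul_nonneg (mul_nonneg (by linarith) hh.le) hMx0.le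
            linarith
          calc (1/Real.pi) * (2*K2*(Mx+4)*h + 2*K2*h*Mx)
              ≤ 2*K2*(Mx+4)*h + 2*K2*h*Mx := mul_le_of_le_one_left hs0 h1pi
            _ = Cx * h := by rw [hCx]; ring
  rw [tendsto_iff_dist_tendsto_zero]
  apply squeeze_zero' (Eventually.of_forall (fun _ => dist_nonneg)) (g := fun h => Cx * h) ?_ ?_
  · filter_upwards [Ioc_mem_nhdsGT_of_mem (Set.mem_Ico.mpr ⟨le_refl (0:ℝ), zero_lt_one⟩)]
    intro h hh
    rw [Real.dist_eq]
    exact key h hh.1 hh.2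
  · have : Tendsto (fun h : ℝ => Cx * h) (nhds 0) (nhds (Cx * 0)) :=
      (continuous_const.mul continuous_id).tendsto 0
    rw [mul_zero] at this
    exact this.mono_left nhdsWithin_le_nhds

end sec2

lemma lip_of_deriv_bound (f : ℝ → ℝ) (hf : Differentiable ℝ f) (C : ℝ) (hC : 0 ≤ C)
    (hb : ∀ x, ‖deriv f x‖ ≤ C) : ∀ u v, |f u - f v| ≤ C * |u - v| := by
  intro u v
  have hlw := lipschitzWith_of_nnnorm_deriv_le (C := Real.toNNReal C) hf (fun x => by
    rw [← NNReal.coe_le_coe, coe_nnnorm, Real.coe_toNNReal _ hC]; exact hb x)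
  have h2 := hlw.dist_le_mul u v
  rw [Real.dist_eq, Real.dist_eq, Real.coe_toNNReal _ hC] at h2
  exact h2

lemma exists_consts {φ : ℝ → ℝ} (hφ : ContDiff ℝ 3 φ) (hs : HasCompactSupport φ) :
    ∃ B L K2 R : ℝ, 0 ≤ B ∧ 0 ≤ L ∧ 0 ≤ K2 ∧ 1 ≤ R ∧
      Differentiable ℝ φ ∧ Continuous (deriv φ) ∧
      (∀ y, |φ y| ≤ B) ∧ (∀ u v, |φ u - φ v| ≤ L * |u - v|) ∧
      (∀ u v, |deriv φ u - deriv φ v| ≤ K2 * |u - v|) ∧ (∀ z, R < |z| → φ z = 0) := by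
  have hφ3 : ContDiff ℝ (((2:ℕ):ℕ∞) + 1) φ := by exact_mod_cast hφ
  have hsplit1 := contDiff_succ_iff_deriv.mp hφ3
  have hdiff : Differentiable ℝ φ := hsplit1.1
  have hφ2 : ContDiff ℝ (((1:ℕ):ℕ∞) + 1) (deriv φ) := by exact_mod_cast hsplit1.2.2
  have hsplit2 := contDiff_succ_iff_deriv.mp hφ2
  have hdiff1 : Differentiable ℝ (deriv φ) := hsplit2.1
  have hcont : Continuous (deriv φ) := hdiff1.continuous
  have hcont2 : Continuous (deriv (deriv φ)) := hsplit2.2.2.continuous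
  have hs1 : HasCompactSupport (deriv φ) := hs.deriv
  have hs2 : HasCompactSupport (deriv (deriv φ)) := hs1.deriv
  obtain ⟨B0, hB0⟩ := hφ.continuous.bounded_above_of_compact_support hs
  obtain ⟨L0, hL0⟩ := hcont.bounded_above_of_compact_support hs1
  obtain ⟨K0, hK0⟩ := hcont2.bounded_above_of_compact_support hs2
  obtain ⟨r, hr⟩ := hs.isBounded.subset_closedBall 0
  refine ⟨max B0 0, max L0 0, max K0 0, max r 1, le_max_right _ _, le_max_right _ _,
    le_max_right _ _, le_max_right _ _, hdiff, hcont, ?_, ?_, ?_, ?_⟩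
  · intro y
    calc |φ y| = ‖φ y‖ := (Real.norm_eq_abs _).symm
      _ ≤ B0 := hB0 y
      _ ≤ max B0 0 := le_max_left _ _
  · apply lip_of_deriv_bound φ hdiff _ (le_max_right _ _)
    intro x
    exact le_trans (hL0 x) (le_max_left _ _)
  · apply lip_of_deriv_bound (deriv φ) hdiff1 _ (le_max_right _ _)
    intro x
    exact le_trans (hK0 x) (le_max_left _ _)
  · intro z hz
    apply image_eq_zero_of_notMem_tsupport
    intro hmem
    have := hr hmem
    rw [Metric.mem_closedBall, Real.dist_eq, sub_zero] at this
    have : |z| ≤ max r 1 := le_trans this (le_max_left _ _)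
    linarith

lemma hDx_meas (φ : ℝ → ℝ) (h : ℝ) : Measurable (fun x => hDx h φ x) := by
  have : (fun x => hDx h φ x)
      = (fun j : ℤ => Hdisc (fun k : ℤ => φ (k * h)) j) ∘ (fun x : ℝ => ⌊x / h⌋) := rfl
  rw [this]
  exact (measurable_of_countable _).comp (Int.measurable_floor.comp (measurable_id.div_const h))

lemma hDx_unif {φ : ℝ → ℝ} {B L R : ℝ} (hB : 0 ≤ B) (hL : 0 ≤ L) (hR : 1 ≤ R)
    (hbound : ∀ y, |φ y| ≤ B) (hlip : ∀ u v, |φ u - φ v| ≤ L * |u - v|)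
    (hsupp : ∀ y, R < |y| → φ y = 0) :
    ∃ C : ℝ, 0 ≤ C ∧ ∀ h : ℝ, 0 < h → h ≤ 1 → ∀ x : ℝ, |hDx h φ x| ≤ C / (1 + |x|) := by
  set C₀ : ℝ := (1 + R) * (3 * L + 2 * B * (R + 1)) + 2 * B * (R + 1) with hC₀
  have hC₀0 : 0 ≤ C₀ := by
    rw [hC₀]
    have e1 : (0:ℝ) ≤ 3 * L + 2 * B * (R + 1) := by nlinarith
    have e2 : (0:ℝ) ≤ (1 + R) * (3 * L + 2 * B * (R + 1)) :=
      mul_nonneg (by linarith) e1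
    nlinarith
  refine ⟨2 * C₀, by linarith, ?_⟩
  intro h hh hh1 x
  set a : ℝ := (⌊x/h⌋ : ℝ) * h with ha
  have hfl : (⌊x/h⌋:ℝ) ≤ x/h := Int.floor_le _
  have hfl2 : x/h < ⌊x/h⌋ + 1 := Int.lt_floor_add_one _
  have hax : a ≤ x := by
    rw [ha]
    calc (⌊x/h⌋:ℝ) * h ≤ (x/h) * h := mul_le_mul_of_nonneg_right hfl hh.le
      _ = x := by field_simp
  have hxa : x < a + h := by
    have h2 : x / h * h < ((⌊x/h⌋:ℝ) + 1) * h := mul_lt_mul_of_pos_right hfl2 hh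
    rw [div_mul_cancel₀ x (ne_of_gt hh)] at h2
    rw [ha]; linarith
  have hxabs : |x| ≤ |a| + 1 := by
    calc |x| = |(x - a) + a| := by ring_nf
      _ ≤ |x - a| + |a| := abs_add_le _ _
      _ ≤ |a| + 1 := by
          have : |x - a| ≤ h := by rw [abs_le]; constructor <;> linarith
          linarith
  have hstep1 : hDx h φ x = (2/Real.pi) * Tsum φ h a := hdisc_eq φ R hsupp hh ⌊x/h⌋
  have hdecay := Tsum_decay φ B L R hB hL hR hbound hlip hsupp hh hh1 a
  have hπ3 := Real.pi_gt_three
  have h2π : 2/Real.pi ≤ 1 := by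
    rw [div_le_one (by linarith)]
    linarith
  calc |hDx h φ x| = (2/Real.pi) * |Tsum φ h a| := by
        rw [hstep1, abs_mul, abs_of_pos (by positivity : (0:ℝ) < 2/Real.pi)]
    _ ≤ 1 * (C₀ / (1 + |a|)) := by
        apply mul_le_mul h2π hdecay (abs_nonneg _) zero_le_one
    _ = C₀ / (1 + |a|) := one_mul _
    _ ≤ 2 * C₀ / (1 + |x|) := by
        rw [div_le_div_iff₀ (by positivity) (by positivity)]
        nlinarith [abs_nonneg a, abs_nonneg x]

theorem stmt_15 (φ : ℝ → ℝ) (hφ : ContDiff ℝ 3 φ) (hsupp : HasCompactSupport φ)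
    (Hφ : ℝ → ℝ)
    (hH : ∀ x : ℝ, Tendsto
      (fun ε : ℝ => (1 / Real.pi) * ∫ y in Set.Ioi ε, (φ (x - y) - φ (x + y)) / y)
      (nhdsWithin 0 (Set.Ioi 0)) (nhds (Hφ x))) :
    Tendsto (fun Δx : ℝ => Real.sqrt (∫ x : ℝ, (Hφ x - hDx Δx φ x) ^ 2))
      (nhdsWithin 0 (Set.Ioi 0)) (nhds 0) := by
  obtain ⟨B, L, K2, R, hB, hL, hK2, hR, hdiff, hcont, hbound, hlip, hlip2, hsupp'⟩ :=
    exists_consts hφ hsupp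
  obtain ⟨C, hC0, hCbd⟩ := hDx_unif hB hL hR hbound hlip hsupp'
  have hpt : ∀ x : ℝ, Tendsto (fun h : ℝ => hDx h φ x) (nhdsWithin 0 (Set.Ioi 0)) (nhds (Hφ x)) :=
    pointwise_conv hdiff hcont hK2 hlip2 hL hlip hR hsupp' Hφ hH
  -- Hφ is measurable
  have hHφmeas : Measurable Hφ := by
    apply measurable_of_tendsto_metrizable' (u := nhdsWithin (0:ℝ) (Set.Ioi 0))
      (f := fun h x => hDx h φ x)
    · exact fun h => hDx_meas φ h
    · rw [tendsto_pi_nhds]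
      exact hpt
  -- Hφ satisfies the same bound
  have hHφbd : ∀ x : ℝ, |Hφ x| ≤ C / (1 + |x|) := by
    intro x
    have habs : Tendsto (fun h : ℝ => |hDx h φ x|) (nhdsWithin 0 (Set.Ioi 0)) (nhds |Hφ x|) :=
      (hpt x).abs
    apply le_of_tendsto habs
    filter_upwards [Ioc_mem_nhdsGT_of_mem (Set.mem_Ico.mpr ⟨le_refl (0:ℝ), zero_lt_one⟩)]
    intro h hh
    exact hCbd h hh.1 hh.2 x
  -- dominated convergence
  have hconv : Tendsto (fun Δx : ℝ => ∫ x : ℝ, (Hφ x - hDx Δx φ x) ^ 2)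
      (nhdsWithin 0 (Set.Ioi 0)) (nhds (∫ _x : ℝ, (0:ℝ))) := by
    apply tendsto_integral_filter_of_dominated_convergence
      (bound := fun x => (2*C)^2 * ((1 + x^2)⁻¹))
    · apply Eventually.of_forall
      intro Δx
      exact ((hHφmeas.sub (hDx_meas φ Δx)).pow_const 2).aestronglyMeasurable
    · filter_upwards [Ioc_mem_nhdsGT_of_mem (Set.mem_Ico.mpr ⟨le_refl (0:ℝ), zero_lt_one⟩)]
      intro Δx hΔx
      apply Eventually.of_forall
      intro x
      have h1 : |Hφ x - hDx Δx φ x| ≤ 2*C / (1 + |x|) := by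
        calc |Hφ x - hDx Δx φ x| ≤ |Hφ x| + |hDx Δx φ x| := abs_sub _ _
          _ ≤ C / (1 + |x|) + C / (1 + |x|) := add_le_add (hHφbd x) (hCbd Δx hΔx.1 hΔx.2 x)
          _ = 2*C / (1 + |x|) := by ring
      have h2 : (1:ℝ) + x^2 ≤ (1 + |x|)^2 := by
        nlinarith [abs_nonneg x, sq_abs x]
      rw [Real.norm_eq_abs, abs_pow]
      calc |Hφ x - hDx Δx φ x| ^ 2 ≤ (2*C / (1 + |x|)) ^ 2 :=
            pow_le_pow_left₀ (abs_nonneg _) h1 2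
        _ = (2*C)^2 / (1 + |x|)^2 := div_pow _ _ 2
        _ ≤ (2*C)^2 / (1 + x^2) := by
            apply div_le_div_of_nonneg_left (by positivity) (by positivity) h2
        _ = (2*C)^2 * ((1 + x^2)⁻¹) := div_eq_mul_inv _ _
    · exact (integrable_inv_one_add_sq).const_mul ((2*C)^2)
    · apply Eventually.of_forall
      intro x
      have := (tendsto_const_nhds (x := Hφ x)
        (f := nhdsWithin (0:ℝ) (Set.Ioi 0))).sub (hpt x)
      rw [sub_self] at this
      have h2 := this.pow 2
      rw [show (0:ℝ)^2 = 0 from by norm_num] at h2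
      exact h2
  rw [show (∫ _x : ℝ, (0:ℝ)) = 0 from integral_zero _ _] at hconv
  have hsqrt := (Real.continuous_sqrt.tendsto 0).comp hconv
  rw [show Real.sqrt 0 = 0 from Real.sqrt_zero] at hsqrt
  exact hsqrt
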